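/- Let p be a prime, F an algebraic closure of ZMod p, K = RatFunc F, and let L be a field extension of K with L finite-dimensional over K (a function field over F). If κ ∈ L is such that for every n ≥ 1 there exists x ∈ L with x^{p^n} = κ, then κ is algebraic over ZMod p (i.e., κ lies in the algebraic closure of the prime field inside L). -/

import Mathlib

open Polynomial

noncomputable section

/-- The degree of a rational function; for an element `r` of a rational function field this
is also its height `h(r) = max (natDegree (num r)) (natDegree (denom r))`. -/
def rfDeg {K : Type*} [Field K] (φ : RatFunc K) : ℕ :=
  max φ.num.natDegree φ.denom.natDegree

/-- Composition of rational functions: `rfComp ψ χ = ψ ∘ χ`, obtained by evaluating `ψ` at `χ`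
via the constant embedding. -/
def rfComp {K : Type*} [Field K] (ψ χ : RatFunc K) : RatFunc K :=
  RatFunc.eval (RatFunc.C) χ ψ

/-- Iterates of a rational function: `Φ_0 = X`, `Φ_1 = φ`, `Φ_{m+1} = φ ∘ Φ_m`. -/
def rfIter {K : Type*} [Field K] (φ : RatFunc K) : ℕ → RatFunc K
  | 0 => RatFunc.X
  | m + 1 => rfComp φ (rfIter φ m)

/-- `γ ∈ K` is not post-critical for `φ`: for every `m ≥ 1` the numerator of `Φ_m - γ`
is separable of degree at least `d(φ)^m - 1`. -/
def NotPostCritical {K : Type*} [Field K] (φ : RatFunc K) (γ : K) : Prop :=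
  ∀ m : ℕ, 1 ≤ m →
    ((rfIter φ m - RatFunc.C γ).num.Separable ∧
      rfDeg φ ^ m - 1 ≤ (rfIter φ m - RatFunc.C γ).num.natDegree)

/-- Coefficientwise image of a rational function under a field embedding `g`. -/
def rfMap {K L : Type*} [Field K] [Field L] (g : K →+* L) (φ : RatFunc K) : RatFunc L :=
  algebraMap (Polynomial L) (RatFunc L) (φ.num.map g) /
    algebraMap (Polynomial L) (RatFunc L) (φ.denom.map g)

/-- `x` is algebraic over `k`, where `k` maps into the ambient ring via `f`. -/
def IsAlgebraicVia {k L : Type*} [CommRing k] [CommRing L] (f : k →+* L) (x : L) : Prop :=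
  ∃ q : Polynomial k, q ≠ 0 ∧ Polynomial.eval₂ f x q = 0

/-- `φ ∈ K(z)` is isotrivial relative to the constant field `k`, where `f : k →+* K̄` and
`g : K →+* K̄` are the embeddings into an algebraic closure of `K`: there are degree-one
`μ, ν ∈ K̄(z)`, inverse to each other, such that all coefficients of the numerator and
denominator of `ν ∘ φ̄ ∘ μ` are algebraic over `k`. -/
def Isotrivial {k K Kbar : Type*} [Field k] [Field K] [Field Kbar]
    (f : k →+* Kbar) (g : K →+* Kbar) (φ : RatFunc K) : Prop :=
  ∃ μ ν : RatFunc Kbar, rfDeg μ = 1 ∧ rfDeg ν = 1 ∧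
    rfComp ν μ = RatFunc.X ∧ rfComp μ ν = RatFunc.X ∧
    (∀ i : ℕ, IsAlgebraicVia f ((rfComp ν (rfComp (rfMap g φ) μ)).num.coeff i)) ∧
    (∀ i : ℕ, IsAlgebraicVia f ((rfComp ν (rfComp (rfMap g φ) μ)).denom.coeff i))

/-- An algebraic closure of `𝔽_p = ZMod p`. -/
abbrev Fp (p : ℕ) [Fact p.Prime] : Type := AlgebraicClosure (ZMod p)

/-- The rational function field `K = 𝔽̄_p(t)`. -/
abbrev Kp (p : ℕ) [Fact p.Prime] : Type := RatFunc (Fp p)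

/-- The embedding `ZMod p →+* K̄` for `K̄` an algebraic closure of `Kp p`. -/
def constEmb (p : ℕ) [Fact p.Prime] (Kbar : Type*) [Field Kbar] [Algebra (Kp p) Kbar] :
    ZMod p →+* Kbar :=
  (algebraMap (Kp p) Kbar).comp ((RatFunc.C : Fp p →+* Kp p).comp (algebraMap (ZMod p) (Fp p)))

end

section AuxLemmas

open Polynomial IntermediateField



lemma pow_mem_of_mem_adjoin {F₀ L : Type*} [Field F₀] [Field L] [Algebra F₀ L]
    {p : ℕ} [Fact p.Prime] [CharP L p]
    (M : IntermediateField F₀ L) {w : L} (hw : w ^ p ∈ M) {b : L}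
    (hb : b ∈ M⟮w⟯) : b ^ p ∈ M := by
  haveI : CharP ↥M p := (algebraMap ↥M L).charP (algebraMap ↥M L).injective p
  have hint : IsIntegral ↥M w :=
    ⟨X ^ p - C (⟨w ^ p, hw⟩ : ↥M), monic_X_pow_sub_C _ (Fact.out : p.Prime).ne_zero, by
      simp⟩
  have hb' : b ∈ Algebra.adjoin ↥M {w} := by
    have := IntermediateField.adjoin_simple_toSubalgebra_of_isAlgebraic hint.isAlgebraic
    rw [← this]
    exact hb
  rw [Algebra.adjoin_singleton_eq_range_aeval] at hb'
  obtain ⟨f, hf⟩ := hb'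
  have hbf : b = aeval w f := hf.symm
  subst hbf
  have hfrob : (aeval w f) ^ p = aeval (w ^ p) (f.map (frobenius ↥M p)) :=
    calc (aeval w f) ^ p = frobenius L p (eval₂ (algebraMap ↥M L) w f) := by
          rw [frobenius_def, aeval_def]
      _ = eval₂ ((frobenius L p).comp (algebraMap ↥M L)) (frobenius L p w) f :=
          Polynomial.hom_eval₂ f (algebraMap ↥M L) (frobenius L p) w
      _ = eval₂ ((algebraMap ↥M L).comp (frobenius ↥M p)) (w ^ p) f := by
          rw [show (frobenius L p).comp (algebraMap ↥M L)
                = (algebraMap ↥M L).comp (frobenius ↥M p)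
              from RingHom.ext fun c => by simp [frobenius_def], frobenius_def]
      _ = aeval (w ^ p) (f.map (frobenius ↥M p)) := by
          rw [aeval_def, Polynomial.eval₂_map]
  rw [hfrob]
  have h2 : (w ^ p) = algebraMap ↥M L (⟨w ^ p, hw⟩ : ↥M) := rfl
  rw [h2, aeval_algebraMap_apply]
  exact SetLike.coe_mem _

lemma key_pow_le_finrank {F₀ L : Type*} [Field F₀] [Field L] [Algebra F₀ L]
    {p : ℕ} [Fact p.Prime] [CharP L p] :
    ∀ (n : ℕ) (M : IntermediateField F₀ L), FiniteDimensional ↥M L →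
      ∀ a : L, a ∈ M → (∀ b ∈ M, b ^ p ≠ a) →
      ∀ x : L, x ^ p ^ n = a → p ^ n ≤ Module.finrank ↥M L := by
  have hp : p.Prime := Fact.out
  intro n
  induction n with
  | zero =>
    intro M hfd a _ _ x _
    simpa using Nat.succ_le_of_lt (Module.finrank_pos (R := ↥M) (M := L))
  | succ n ih =>
    intro M hfd a ha hA x hx
    set w : L := x ^ p ^ n with hw
    have hwp : w ^ p = a := by
      rw [hw, ← pow_mul, ← pow_succ, hx]
    have hwpM : w ^ p ∈ M := hwp ▸ ha
    -- the minimal polynomial of w over M is X^p - C a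
    have hirr : Irreducible (X ^ p - C (⟨a, ha⟩ : ↥M)) := by
      apply X_pow_sub_C_irreducible_of_prime hp
      intro b hb
      apply hA ↑b b.2
      have := congrArg (algebraMap ↥M L) hb
      simpa using this
    have hint : IsIntegral ↥M w :=
      ⟨X ^ p - C (⟨a, ha⟩ : ↥M), monic_X_pow_sub_C _ hp.ne_zero, by simp [hwp]⟩
    have hmin : minpoly ↥M w = X ^ p - C (⟨a, ha⟩ : ↥M) :=
      (minpoly.eq_of_irreducible_of_monic hirr
        (show aeval w (X ^ p - C (⟨a, ha⟩ : ↥M)) = 0 by simp [hwp])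
        (monic_X_pow_sub_C _ hp.ne_zero)).symm
    haveI hfd1 : FiniteDimensional ↥M ↥M⟮w⟯ := adjoin.finiteDimensional hint
    have hrank1 : Module.finrank ↥M ↥M⟮w⟯ = p := by
      rw [adjoin.finrank hint, hmin]
      rw [natDegree_X_pow_sub_C]
    -- apply IH over M⟮w⟯, restricted to base F₀
    haveI hfd2 : FiniteDimensional ↥M⟮w⟯ L := FiniteDimensional.right ↥M ↥M⟮w⟯ L
    have hA' : ∀ b ∈ (M⟮w⟯).restrictScalars F₀, b ^ p ≠ w := by
      intro b hb hbw
      have hbM : b ^ p ∈ M := pow_mem_of_mem_adjoin M hwpM hb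
      rw [hbw] at hbM
      exact hA w hbM hwp
    have hw' : w ∈ (M⟮w⟯).restrictScalars F₀ :=
      mem_adjoin_simple_self ↥M w
    haveI hfd3 : FiniteDimensional ↥((M⟮w⟯).restrictScalars F₀) L := hfd2
    have hIH : p ^ n ≤ Module.finrank ↥((M⟮w⟯).restrictScalars F₀) L :=
      ih ((M⟮w⟯).restrictScalars F₀) hfd3 w hw' hA' x rfl
    have hIH' : p ^ n ≤ Module.finrank ↥M⟮w⟯ L := hIH
    have hmul : Module.finrank ↥M ↥M⟮w⟯ * Module.finrank ↥M⟮w⟯ L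
        = Module.finrank ↥M L := Module.finrank_mul_finrank _ _ _
    calc p ^ (n + 1) = p * p ^ n := by ring
      _ ≤ p * Module.finrank ↥M⟮w⟯ L := Nat.mul_le_mul_left p hIH'
      _ = Module.finrank ↥M L := by rw [← hmul, hrank1]


lemma swap_eval_ne_zero {F E : Type*} [Field F] [Field E] [Algebra F E]
    {κ : E} (hκ : Transcendental F κ) {Q : Polynomial (Polynomial F)} (hQ : Q ≠ 0) :
    Polynomial.eval₂ (Polynomial.mapRingHom (algebraMap F E)) (Polynomial.C κ) Q ≠ 0 := by
  intro h0
  obtain ⟨j1, hj1⟩ : ∃ n, Q.coeff n ≠ 0 := by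
    by_contra hct; push_neg at hct; exact hQ (Polynomial.ext fun n => by simp [hct n])
  obtain ⟨i, hi⟩ : ∃ n, (Q.coeff j1).coeff n ≠ 0 := by
    by_contra hct; push_neg at hct; exact hj1 (Polynomial.ext fun n => by simp [hct n])
  set r : Polynomial F := ∑ j ∈ Q.support, Polynomial.C ((Q.coeff j).coeff i) * X ^ j with hr
  have hrj : r.coeff j1 = (Q.coeff j1).coeff i := by
    rw [hr, finset_sum_coeff, Finset.sum_eq_single j1]
    · simp
    · intro b hb hne
      simp [coeff_C_mul, coeff_X_pow, (Ne.symm hne)]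
    · intro hns
      simp [Polynomial.notMem_support_iff.mp hns]
  have hrne : r ≠ 0 := fun hz => hi (by rw [← hrj, hz, Polynomial.coeff_zero])
  have haev : Polynomial.aeval κ r = 0 := by
    have hc := congrArg (fun q => Polynomial.coeff q i) h0
    simp only [Polynomial.coeff_zero] at hc
    rw [Polynomial.eval₂_eq_sum, Polynomial.sum_def, finset_sum_coeff] at hc
    rw [hr, map_sum, ← hc]
    apply Finset.sum_congr rfl
    intro j _
    rw [← C_pow, coeff_mul_C, coe_mapRingHom, coeff_map]
    simp [map_mul, map_pow, aeval_C, aeval_X]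
  exact hrne (transcendental_iff.mp hκ r haev)

lemma no_pth_root {F L : Type*} [Field F] [Field L] [Algebra F L] {κ : L}
    (hκ : Transcendental F κ) {p : ℕ} (hp : p.Prime) :
    ∀ b ∈ F⟮κ⟯, b ^ p ≠ κ := by
  intro b hb hbp
  have hκ' := transcendental_iff.mp hκ
  obtain ⟨f, g, hfg⟩ := (IntermediateField.mem_adjoin_simple_iff F b).mp hb
  by_cases hg : g = 0
  · rw [hg, map_zero, div_zero] at hfg
    rw [hfg, zero_pow hp.ne_zero] at hbp
    exact hκ (hbp ▸ isAlgebraic_zero)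
  · have hgκ : Polynomial.aeval κ g ≠ 0 := fun hz => hg (hκ' g hz)
    have hb2 : b * Polynomial.aeval κ g = Polynomial.aeval κ f := by
      rw [hfg]; field_simp
    have hkey : Polynomial.aeval κ (f ^ p - X * g ^ p) = 0 := by
      have h2 : (Polynomial.aeval κ f) ^ p = κ * (Polynomial.aeval κ g) ^ p := by
        rw [← hb2, mul_pow, hbp]
      simp only [map_sub, map_mul, map_pow, Polynomial.aeval_X]
      rw [h2]
      ring
    have hf0 : f ^ p - X * g ^ p = 0 := hκ' _ hkey
    have hfp : f ^ p = X * g ^ p := sub_eq_zero.mp hf0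
    have hfne : f ≠ 0 := by
      rintro rfl
      rw [zero_pow hp.ne_zero] at hfp
      exact hg (pow_eq_zero_iff hp.ne_zero |>.mp (by
        rcases mul_eq_zero.mp hfp.symm with h | h
        · exact absurd h X_ne_zero
        · exact h))
    have hdeg := congrArg natDegree hfp
    rw [natDegree_pow, natDegree_mul X_ne_zero (pow_ne_zero _ hg), natDegree_X,
      natDegree_pow] at hdeg
    have hdvd : p ∣ 1 + p * g.natDegree := hdeg ▸ Dvd.intro _ rfl
    have : p ∣ 1 := (Nat.dvd_add_right (Dvd.intro _ rfl)).mp (by rwa [Nat.add_comm] at hdvd)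
    exact absurd (Nat.dvd_one.mp this) hp.one_lt.ne'

end AuxLemmas

noncomputable section

open IntermediateField

/-- **Theorem (elements with all `pⁿ`-th roots in a function field are constants).** -/
theorem algebraic_of_all_p_power_roots
    (p : ℕ) [Fact p.Prime]
    (L : Type) [Field L] [Algebra (Kp p) L] [FiniteDimensional (Kp p) L]
    (κ : L)
    (h : ∀ n : ℕ, 1 ≤ n → ∃ x : L, x ^ (p ^ n) = κ) :
    IsAlgebraicVia
      ((algebraMap (Kp p) L).comp
        ((RatFunc.C : Fp p →+* Kp p).comp (algebraMap (ZMod p) (Fp p)))) κ := by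
  classical
  set F := Fp p with hF
  set K := Kp p with hK
  letI : Algebra F L := ((algebraMap K L).comp (RatFunc.C : F →+* K)).toAlgebra
  haveI : IsScalarTower F K L := IsScalarTower.of_algebraMap_eq' (by
    rw [RatFunc.algebraMap_eq_C]; rfl)
  haveI : CharP K p := charP_of_injective_algebraMap (algebraMap F K).injective p
  haveI : CharP L p := charP_of_injective_algebraMap (algebraMap K L).injective p
  have hp : p.Prime := Fact.out
  have hFalg : IsAlgebraic F κ := by
    by_contra hT
    have hκtr : Transcendental F κ := hT
    set tL : L := algebraMap K L RatFunc.X with htLdef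
    have htX : Transcendental F (RatFunc.X : K) := by
      have h1 : Transcendental F (Polynomial.X : Polynomial F) := Polynomial.transcendental_X F
      have h2 := (transcendental_algebraMap_iff (R := F) (S := Polynomial F) (A := K)
        (IsFractionRing.injective (Polynomial F) K)).mpr h1
      rwa [RatFunc.algebraMap_X] at h2
    have httr : Transcendental F tL :=
      (transcendental_algebraMap_iff (R := F) (S := K) (A := L)
        (algebraMap K L).injective).mpr htX
    letI : Algebra (Polynomial F) L :=
      ((algebraMap K L).comp (algebraMap (Polynomial F) K)).toAlgebra
    haveI : IsScalarTower (Polynomial F) K L := IsScalarTower.of_algebraMap_eq' rfl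
    have hKalg : IsAlgebraic K κ := Algebra.IsAlgebraic.isAlgebraic κ
    have hPalg : IsAlgebraic (Polynomial F) κ :=
      (IsFractionRing.isAlgebraic_iff (Polynomial F) K L).mpr hKalg
    obtain ⟨Q, hQ0, hQev⟩ := hPalg
    set E : IntermediateField F L := F⟮κ⟯ with hE
    set κg : ↥E := AdjoinSimple.gen F κ with hκg
    have hκgtr : Transcendental F κg := by
      intro hA
      apply hκtr
      have := (isAlgebraic_algebraMap_iff (R := F) (S := ↥E) (A := L)
        (algebraMap ↥E L).injective).mpr hA
      rwa [IntermediateField.AdjoinSimple.algebraMap_gen] at this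
    -- the composed algebra map from Polynomial F to L is evaluation at tL
    have hcomp : (algebraMap (Polynomial F) L : Polynomial F →+* L)
        = Polynomial.eval₂RingHom (algebraMap F L) tL := by
      apply Polynomial.ringHom_ext
      · intro c
        show algebraMap K L (algebraMap (Polynomial F) K (Polynomial.C c)) = _
        rw [RatFunc.algebraMap_C]
        rw [coe_eval₂RingHom, eval₂_C]
        rfl
      · show algebraMap K L (algebraMap (Polynomial F) K Polynomial.X) = _
        rw [RatFunc.algebraMap_X, coe_eval₂RingHom, eval₂_X]
    -- transfer algebraicity of κ over Polynomial F to algebraicity of tL over E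
    set R : Polynomial ↥E :=
      Polynomial.eval₂ (Polynomial.mapRingHom (algebraMap F ↥E)) (Polynomial.C κg) Q with hR
    have hR0 : R ≠ 0 := swap_eval_ne_zero hκgtr hQ0
    have hRev : Polynomial.aeval tL R = 0 := by
      have hhom := Polynomial.hom_eval₂ Q (Polynomial.mapRingHom (algebraMap F ↥E))
        (Polynomial.eval₂RingHom (algebraMap ↥E L) tL) (Polynomial.C κg)
      have hgx : (Polynomial.eval₂RingHom (algebraMap ↥E L) tL) (Polynomial.C κg) = κ := by
        rw [coe_eval₂RingHom, eval₂_C, IntermediateField.AdjoinSimple.algebraMap_gen]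
      have hgf : (Polynomial.eval₂RingHom (algebraMap ↥E L) tL).comp
          (Polynomial.mapRingHom (algebraMap F ↥E))
          = (algebraMap (Polynomial F) L : Polynomial F →+* L) := by
        apply Polynomial.ringHom_ext
        · intro c
          show Polynomial.eval₂ (algebraMap ↥E L) tL
            (Polynomial.map (algebraMap F ↥E) (Polynomial.C c)) = _
          rw [Polynomial.map_C, eval₂_C, ← IsScalarTower.algebraMap_apply]
          show algebraMap F L c = algebraMap K L (algebraMap (Polynomial F) K (Polynomial.C c))
          rw [RatFunc.algebraMap_C]
          rfl
        · show Polynomial.eval₂ (algebraMap ↥E L) tL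
            (Polynomial.map (algebraMap F ↥E) Polynomial.X) = _
          rw [Polynomial.map_X, eval₂_X]
          show tL = algebraMap K L (algebraMap (Polynomial F) K Polynomial.X)
          rw [RatFunc.algebraMap_X]
      rw [aeval_def] at hQev
      rw [aeval_def, ← coe_eval₂RingHom, hR, hhom, hgx, hgf]
      exact hQev
    have htLalg : IsAlgebraic ↥E tL := ⟨R, hR0, hRev⟩
    -- L is finite dimensional over E
    haveI hfd1 : FiniteDimensional ↥E ↥(E⟮tL⟯) := adjoin.finiteDimensional htLalg.isIntegral
    set Kimg : IntermediateField F L := (IsScalarTower.toAlgHom F K L).fieldRange with hKimg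
    haveI hKimgfd : Module.Finite ↥Kimg L :=
      Module.Finite.of_equiv_equiv
        (AlgEquiv.ofInjectiveField (IsScalarTower.toAlgHom F K L)).toRingEquiv
        (RingEquiv.refl L) (by ext z; rfl)
    have hle : Kimg ≤ IntermediateField.restrictScalars F (E⟮tL⟯) := by
      rintro y ⟨z, rfl⟩
      have hnum : ∀ q : Polynomial F, Polynomial.aeval tL q ∈ E⟮tL⟯ := by
        intro q
        have hmem : Polynomial.aeval tL q ∈ Algebra.adjoin F {tL} :=
          Polynomial.aeval_mem_adjoin_singleton F tL
        have hsub : Algebra.adjoin F {tL}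
            ≤ (IntermediateField.restrictScalars F (E⟮tL⟯)).toSubalgebra :=
          Algebra.adjoin_le (by
            intro s hs
            rw [Set.mem_singleton_iff] at hs
            subst hs
            exact mem_adjoin_simple_self ↥E tL)
        exact hsub hmem
      have heq : (IsScalarTower.toAlgHom F K L) z
          = Polynomial.aeval tL z.num / Polynomial.aeval tL z.denom := by
        show algebraMap K L z = _
        conv_lhs => rw [← RatFunc.num_div_denom z]
        rw [map_div₀]
        have h1 : ∀ q : Polynomial F,
            algebraMap K L (algebraMap (Polynomial F) K q) = Polynomial.aeval tL q := by
          intro q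
          show algebraMap (Polynomial F) L q = _
          rw [hcomp, coe_eval₂RingHom, aeval_def]
        rw [h1, h1]
      show algebraMap K L z ∈ IntermediateField.restrictScalars F (E⟮tL⟯)
      rw [show algebraMap K L z = (IsScalarTower.toAlgHom F K L) z from rfl, heq]
      exact div_mem (hnum z.num) (hnum z.denom)
    haveI hfd2' : FiniteDimensional ↥(IntermediateField.extendScalars hle) L :=
      FiniteDimensional.right ↥Kimg ↥(IntermediateField.extendScalars hle) L
    haveI hfd2 : FiniteDimensional ↥(E⟮tL⟯) L := hfd2'
    haveI hfdE : FiniteDimensional ↥E L := FiniteDimensional.trans ↥E ↥(E⟮tL⟯) L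
    -- contradiction via the key lemma
    have hroot : ∀ b ∈ E, b ^ p ≠ κ := no_pth_root hκtr hp
    set N := Module.finrank ↥E L with hN
    obtain ⟨x, hx⟩ := h (N + 1) (Nat.le_add_left 1 N)
    have hkey := key_pow_le_finrank (p := p) (N + 1) E hfdE κ
      (mem_adjoin_simple_self F κ) hroot x hx
    have hlt : N < p ^ (N + 1) :=
      lt_of_lt_of_le (Nat.lt_pow_self hp.one_lt)
        (Nat.pow_le_pow_right hp.pos (Nat.le_succ N))
    omega
  -- conclude: κ is algebraic over ZMod p
  letI : Algebra (ZMod p) L :=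
    ((algebraMap K L).comp ((RatFunc.C : F →+* K).comp (algebraMap (ZMod p) F))).toAlgebra
  haveI : IsScalarTower (ZMod p) F L := IsScalarTower.of_algebraMap_eq' rfl
  haveI : Algebra.IsIntegral (ZMod p) F := Algebra.isAlgebraic_iff_isIntegral.mp inferInstance
  have hZ : IsIntegral (ZMod p) κ := isIntegral_trans κ hFalg.isIntegral
  obtain ⟨q, hq0, hqev⟩ := hZ.isAlgebraic
  rw [Polynomial.aeval_def] at hqev
  exact ⟨q, hq0, hqev⟩


end
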